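/- Let α > 0 and let u : [0,1] → ℝ satisfy u(1-x) + (1-x)^α · u(y/(1-x)) = u(y) + (1-y)^α · u((1-x-y)/(1-y)) for all x, y ∈ [0,1) with x + y ≤ 1. Define h : [0,1] → ℝ by h(x) = u(x) − u(1−x). Then for every z ∈ [1/2, 1], h(z) = z^α · h(2 − 1/z) and h(z) = − z^α · h(1/z − 1); in particular h(1/2) = 0. -/
import Mathlib


/-- For `α > 0` and `u` a solution of the fundamental functional equation, the
function `h(x) = u(x) - u(1-x)` satisfies `h(z) = z^α h(2 - 1/z)` and `h(z) = -z^α h(1/z - 1)`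
for every `z ∈ [1/2, 1]`; in particular `h(1/2) = 0`. -/
theorem stmt7 (α : ℝ) (hα : 0 < α) (u : ℝ → ℝ)
    (heq : ∀ x y : ℝ, 0 ≤ x → x < 1 → 0 ≤ y → y < 1 → x + y ≤ 1 →
      u (1 - x) + (1 - x) ^ α * u (y / (1 - x))
        = u y + (1 - y) ^ α * u ((1 - x - y) / (1 - y)))
    (h : ℝ → ℝ) (hh : ∀ x : ℝ, h x = u x - u (1 - x)) :
    (∀ z : ℝ, 1 / 2 ≤ z → z ≤ 1 →
      h z = z ^ α * h (2 - 1 / z) ∧ h z = -(z ^ α) * h (1 / z - 1)) ∧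
    h (1 / 2) = 0 := by
  have anti : ∀ x : ℝ, h (1 - x) = -h x := by
    intro x
    have hx : 1 - (1 - x) = x := by ring
    rw [hh, hh, hx]; ring
  constructor
  · intro z hz1 hz2
    have hz0 : (0:ℝ) < z := by linarith
    have key : h z = -(z ^ α) * h (1 / z - 1) := by
      have e := heq (1 - z) (1 - z) (by linarith) (by linarith) (by linarith)
        (by linarith) (by linarith)
      have h1 : 1 - (1 - z) = z := by ring
      rw [h1] at e
      have h2 : (z - (1 - z)) / z = 1 - (1 / z - 1) := by
        field_simp
      have h3 : (1 - z) / z = 1 / z - 1 := by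
        field_simp
      rw [h2, h3] at e
      rw [hh, hh]
      linear_combination e
    refine ⟨?_, key⟩
    have h4 : 2 - 1 / z = 1 - (1 / z - 1) := by ring
    rw [key, h4, anti]; ring
  · rw [hh]; norm_num
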